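/- Let T be a finite simple tree. Then 0 is a root of the Laplacian matching polynomial 𝓛𝓜(T, x) of multiplicity exactly 1. -/

import Mathlib

namespace LM

open Finset

variable {V : Type*}

/-- The set of matchings of `G`, as finsets of edges that pairwise share no vertex. -/
def matchings [Fintype V] [DecidableEq V] (G : SimpleGraph V) [DecidableRel G.Adj] :
    Finset (Finset (Sym2 V)) :=
  G.edgeFinset.powerset.filter
    (fun M => ∀ e ∈ M, ∀ f ∈ M, e ≠ f → ∀ w : V, w ∈ e → w ∉ f)

/-- The set of vertices covered by a set of edges. -/
def covered [Fintype V] [DecidableEq V] (M : Finset (Sym2 V)) : Finset V :=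
  Finset.univ.filter (fun v => ∃ e ∈ M, v ∈ e)

/-- The multivariate matching polynomial `𝔐(G, x_G)`. -/
noncomputable def mvMatch [Fintype V] [DecidableEq V] (G : SimpleGraph V)
    [DecidableRel G.Adj] : MvPolynomial V ℝ :=
  ∑ M ∈ matchings G, (-1 : MvPolynomial V ℝ) ^ M.card *
    ∏ v ∈ Finset.univ \ covered M, MvPolynomial.X v

/-- The matching polynomial `𝓜(G, x)`. -/
noncomputable def matchPoly [Fintype V] [DecidableEq V] (G : SimpleGraph V)
    [DecidableRel G.Adj] : Polynomial ℝ :=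
  ∑ M ∈ matchings G, (-1 : Polynomial ℝ) ^ M.card *
    Polynomial.X ^ (Fintype.card V - 2 * M.card)

/-- The Laplacian matching polynomial `𝓛𝓜(G, x)`. -/
noncomputable def lapMatch [Fintype V] [DecidableEq V] (G : SimpleGraph V)
    [DecidableRel G.Adj] : Polynomial ℝ :=
  ∑ M ∈ matchings G, (-1 : Polynomial ℝ) ^ M.card *
    ∏ v ∈ Finset.univ \ covered M, (Polynomial.X - Polynomial.C (G.degree v : ℝ))

/-- The largest real root of a polynomial (`sSup` of its set of real roots). -/
noncomputable def lroot (p : Polynomial ℝ) : ℝ := sSup {x : ℝ | p.IsRoot x}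

instance instDecidableRelInduceAdj (G : SimpleGraph V) [DecidableRel G.Adj] (s : Set V) :
    DecidableRel (G.induce s).Adj := fun a b =>
  inferInstanceAs (Decidable (G.Adj a b))

section Aux

variable [Fintype V] [DecidableEq V] (T : SimpleGraph V) [DecidableRel T.Adj]

/-- endpoints of a `Sym2` as a finset -/
def es (e : Sym2 V) : Finset V := Finset.univ.filter (· ∈ e)

/-- the uncovered vertices (avoiding `U`) -/
def SS (U : Finset V) (M : Finset (Sym2 V)) : Finset V := Finset.univ \ (covered M ∪ U)

def matchU (U : Finset V) : Finset (Finset (Sym2 V)) :=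
  (matchings T).filter fun M => Disjoint (covered M) U

def tf (U : Finset V) (junk : Sym2 V) (M : Finset (Sym2 V)) : V → Finset (Sym2 V) :=
  fun v => if v ∈ SS U M then T.incidenceFinset v else {junk}

def Om (U : Finset V) (junk : Sym2 V) : Finset ((_ : Finset (Sym2 V)) × (V → Sym2 V)) :=
  (matchU T U).sigma fun M => Fintype.piFinset (tf T U junk M)

def Ds (U : Finset V) (p : (_ : Finset (Sym2 V)) × (V → Sym2 V)) : Finset (Sym2 V) :=
  T.edgeFinset.filter fun e => e ∈ p.1 ∨ ∀ w ∈ e, w ∈ SS U p.1 ∧ p.2 w = e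

noncomputable def tog (U : Finset V) (junk : Sym2 V)
    (p : (_ : Finset (Sym2 V)) × (V → Sym2 V)) : (_ : Finset (Sym2 V)) × (V → Sym2 V) :=
  if h : (Ds T U p).Nonempty then
    let e := h.choose
    if e ∈ p.1 then ⟨p.1.erase e, fun v => if v ∈ e then e else p.2 v⟩
    else ⟨insert e p.1, fun v => if v ∈ e then junk else p.2 v⟩
  else p

variable {T}

lemma mem_matchings {M : Finset (Sym2 V)} :
    M ∈ matchings T ↔ M ⊆ T.edgeFinset ∧
      ∀ e ∈ M, ∀ f ∈ M, e ≠ f → ∀ w : V, w ∈ e → w ∉ f := by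
  simp [matchings]

lemma mem_covered {M : Finset (Sym2 V)} {v : V} : v ∈ covered M ↔ ∃ e ∈ M, v ∈ e := by
  simp [covered]

@[simp] lemma covered_empty : covered (∅ : Finset (Sym2 V)) = ∅ := by
  ext v; simp [covered]

lemma mem_es {e : Sym2 V} {v : V} : v ∈ es e ↔ v ∈ e := by simp [es]

lemma es_card {e : Sym2 V} (he : e ∈ T.edgeFinset) : (es e).card = 2 := by
  induction e with
  | _ a b =>
    rw [SimpleGraph.mem_edgeFinset, SimpleGraph.mem_edgeSet] at he
    have hab : a ≠ b := he.ne
    have : es s(a, b) = {a, b} := by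
      ext x; simp [mem_es, Sym2.mem_iff]
    rw [this, card_insert_of_notMem (by simp [hab]), card_singleton]

lemma mem_SS {U : Finset V} {M : Finset (Sym2 V)} {v : V} :
    v ∈ SS U M ↔ v ∉ covered M ∧ v ∉ U := by
  simp [SS, not_or]

lemma covered_insert {M : Finset (Sym2 V)} {e : Sym2 V} :
    covered (insert e M) = covered M ∪ es e := by
  ext v
  simp only [mem_covered, mem_union, mem_es, mem_insert]
  constructor
  · rintro ⟨f, (rfl | hf), hv⟩
    · exact Or.inr hv
    · exact Or.inl ⟨f, hf, hv⟩
  · rintro (⟨f, hf, hv⟩ | hv)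
    · exact ⟨f, Or.inr hf, hv⟩
    · exact ⟨e, Or.inl rfl, hv⟩

lemma covered_erase {M : Finset (Sym2 V)} (hM : M ∈ matchings T) {e : Sym2 V} (he : e ∈ M) :
    covered (M.erase e) = covered M \ es e := by
  ext v
  simp only [mem_covered, mem_sdiff, mem_es, mem_erase]
  constructor
  · rintro ⟨f, ⟨hfe, hf⟩, hv⟩
    refine ⟨⟨f, hf, hv⟩, fun hve => ?_⟩
    exact (mem_matchings.1 hM).2 f hf e he hfe v hv hve
  · rintro ⟨⟨f, hf, hv⟩, hve⟩
    exact ⟨f, ⟨fun h => hve (h ▸ hv), hf⟩, hv⟩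

lemma es_subset_covered {M : Finset (Sym2 V)} {e : Sym2 V} (he : e ∈ M) :
    es e ⊆ covered M := fun v hv => mem_covered.2 ⟨e, he, mem_es.1 hv⟩

lemma matchings_mono {M N : Finset (Sym2 V)} (hNM : N ⊆ M) (hM : M ∈ matchings T) :
    N ∈ matchings T := by
  rw [mem_matchings] at hM ⊢
  exact ⟨hNM.trans hM.1, fun e he f hf => hM.2 e (hNM he) f (hNM hf)⟩

/-- membership in `Om` -/
lemma mem_Om {U : Finset V} {junk : Sym2 V} {p : (_ : Finset (Sym2 V)) × (V → Sym2 V)} :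
    p ∈ Om T U junk ↔ p.1 ∈ matchings T ∧ Disjoint (covered p.1) U ∧
      (∀ v ∈ SS U p.1, p.2 v ∈ T.incidenceFinset v) ∧ ∀ v, v ∉ SS U p.1 → p.2 v = junk := by
  cases p with
  | mk M g =>
    simp only [Om, mem_sigma, matchU, mem_filter, Fintype.mem_piFinset, tf]
    constructor
    · rintro ⟨⟨h1, h2⟩, h3⟩
      refine ⟨h1, h2, fun v hv => ?_, fun v hv => ?_⟩
      · have := h3 v; rwa [if_pos hv] at this
      · have := h3 v; rwa [if_neg hv, mem_singleton] at this
    · rintro ⟨h1, h2, h3, h4⟩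
      refine ⟨⟨h1, h2⟩, fun v => ?_⟩
      by_cases hv : v ∈ SS U M
      · rw [if_pos hv]; exact h3 v hv
      · rw [if_neg hv, mem_singleton]; exact h4 v hv

lemma mem_Ds {U : Finset V} {p : (_ : Finset (Sym2 V)) × (V → Sym2 V)} {e : Sym2 V} :
    e ∈ Ds T U p ↔ e ∈ T.edgeFinset ∧
      (e ∈ p.1 ∨ ∀ w ∈ e, w ∈ SS U p.1 ∧ p.2 w = e) := by
  simp [Ds]

lemma subset_Ds {U : Finset V} {junk : Sym2 V} {p : (_ : Finset (Sym2 V)) × (V → Sym2 V)}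
    (hp : p ∈ Om T U junk) : p.1 ⊆ Ds T U p := by
  intro e he
  exact mem_Ds.2 ⟨(mem_matchings.1 (mem_Om.1 hp).1).1 he, Or.inl he⟩

lemma SS_erase {U : Finset V} {M : Finset (Sym2 V)} (hM : M ∈ matchings T)
    (hdis : Disjoint (covered M) U) {e : Sym2 V} (he : e ∈ M) :
    SS U (M.erase e) = SS U M ∪ es e := by
  have hcov : es e ⊆ covered M := es_subset_covered he
  ext v
  have h1 : v ∈ e → v ∈ covered M := fun h => hcov (mem_es.2 h)
  have h2 : v ∈ e → v ∉ U := fun h => disjoint_left.1 hdis (h1 h)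
  simp only [mem_SS, mem_union, mem_es, covered_erase hM he, mem_sdiff, not_and, not_not]
  by_cases hve : v ∈ e
  · simp [hve, h1 hve, h2 hve]
  · simp [hve]

lemma SS_insert {U : Finset V} {M : Finset (Sym2 V)} {e : Sym2 V} :
    SS U (insert e M) = SS U M \ es e := by
  ext v
  simp only [mem_SS, covered_insert, mem_union, mem_sdiff, mem_es, not_or]
  tauto

lemma step_erase {U : Finset V} {junk : Sym2 V} {M : Finset (Sym2 V)} {g : V → Sym2 V}
    (hp : (⟨M, g⟩ : (_ : Finset (Sym2 V)) × (V → Sym2 V)) ∈ Om T U junk)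
    {e : Sym2 V} (he : e ∈ M) :
    (⟨M.erase e, fun v => if v ∈ e then e else g v⟩ :
        (_ : Finset (Sym2 V)) × (V → Sym2 V)) ∈ Om T U junk ∧
    Ds T U ⟨M.erase e, fun v => if v ∈ e then e else g v⟩ = Ds T U ⟨M, g⟩ ∧
    (M.erase e).card + 1 = M.card ∧
    (SS U (M.erase e)).card = (SS U M).card + 2 := by
  obtain ⟨h1, h2, h3, h4⟩ := mem_Om.1 hp
  have hee : e ∈ T.edgeFinset := (mem_matchings.1 h1).1 he
  have hcov : es e ⊆ covered M := es_subset_covered he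
  have hS' : SS U (M.erase e) = SS U M ∪ es e := SS_erase h1 h2 he
  have hesS : ∀ v, v ∈ e → v ∉ SS U M := by
    intro v hv hvS
    exact (mem_SS.1 hvS).1 (hcov (mem_es.2 hv))
  refine ⟨?_, ?_, ?_, ?_⟩
  · rw [mem_Om]
    refine ⟨matchings_mono (erase_subset e M) h1, Disjoint.mono_left ?_ h2, ?_, ?_⟩
    · rw [covered_erase h1 he]; exact sdiff_subset
    · intro v hv
      by_cases hve : v ∈ e
      · simp only [if_pos hve]
        rw [SimpleGraph.mem_incidenceFinset]
        exact ⟨SimpleGraph.mem_edgeFinset.1 hee, hve⟩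
      · simp only [if_neg hve]
        apply h3
        rcases mem_union.1 (hS' ▸ hv) with h | h
        · exact h
        · exact absurd (mem_es.1 h) hve
    · intro v hv
      have hve : v ∉ e := by
        intro hve
        exact hv (hS' ▸ mem_union_right _ (mem_es.2 hve))
      simp only [if_neg hve]
      exact h4 v (fun hvS => hv (hS' ▸ mem_union_left _ hvS))
  · ext f
    simp only [mem_Ds]
    by_cases hfE : f ∈ T.edgeFinset
    · simp only [hfE, true_and]
      by_cases hfe : f = e
      · subst hfe
        simp only [mem_erase, ne_eq, not_true_eq_false, false_and, false_or, he, true_or,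
          iff_true]
        intro w hw
        exact ⟨hS' ▸ mem_union_right _ (mem_es.2 hw), if_pos hw⟩
      · simp only [mem_erase, ne_eq, hfe, not_false_eq_true, true_and]
        constructor
        · rintro (hfM | hA)
          · exact Or.inl hfM
          · refine Or.inr fun w hw => ?_
            have hwe : w ∉ e := by
              intro hwe
              obtain ⟨_, hgw⟩ := hA w hw
              rw [if_pos hwe] at hgw
              exact hfe hgw.symm
            obtain ⟨hwS, hgw⟩ := hA w hw
            rw [if_neg hwe] at hgw
            refine ⟨?_, hgw⟩
            rcases mem_union.1 (hS' ▸ hwS) with h | h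
            · exact h
            · exact absurd (mem_es.1 h) hwe
        · rintro (hfM | hA)
          · exact Or.inl hfM
          · refine Or.inr fun w hw => ?_
            obtain ⟨hwS, hgw⟩ := hA w hw
            have hwe : w ∉ e := fun hwe => hesS w hwe hwS
            rw [if_neg hwe]
            exact ⟨hS' ▸ mem_union_left _ hwS, hgw⟩
    · simp [hfE]
  · have := card_erase_of_mem he
    have : 1 ≤ M.card := card_pos.2 ⟨e, he⟩
    omega
  · rw [hS', card_union_of_disjoint, es_card hee]
    rw [disjoint_right]
    intro v hv
    exact hesS v (mem_es.1 hv)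

lemma step_insert {U : Finset V} {junk : Sym2 V} {M : Finset (Sym2 V)} {g : V → Sym2 V}
    (hp : (⟨M, g⟩ : (_ : Finset (Sym2 V)) × (V → Sym2 V)) ∈ Om T U junk)
    {e : Sym2 V} (hee : e ∈ T.edgeFinset) (he : e ∉ M)
    (hA : ∀ w ∈ e, w ∈ SS U M ∧ g w = e) :
    (⟨insert e M, fun v => if v ∈ e then junk else g v⟩ :
        (_ : Finset (Sym2 V)) × (V → Sym2 V)) ∈ Om T U junk ∧
    Ds T U ⟨insert e M, fun v => if v ∈ e then junk else g v⟩ = Ds T U ⟨M, g⟩ ∧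
    (insert e M).card = M.card + 1 ∧
    (SS U M).card = (SS U (insert e M)).card + 2 := by
  obtain ⟨h1, h2, h3, h4⟩ := mem_Om.1 hp
  have hesS : es e ⊆ SS U M := fun v hv => (hA v (mem_es.1 hv)).1
  have hS' : SS U (insert e M) = SS U M \ es e := SS_insert
  have hncov : ∀ w ∈ e, w ∉ covered M := fun w hw => (mem_SS.1 (hA w hw).1).1
  refine ⟨?_, ?_, card_insert_of_notMem he, ?_⟩
  · rw [mem_Om]
    dsimp only
    refine ⟨?_, ?_, ?_, ?_⟩
    · rw [mem_matchings]
      refine ⟨insert_subset hee (mem_matchings.1 h1).1, ?_⟩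
      intro e₁ he₁ e₂ he₂ hne w hw₁
      rcases mem_insert.1 he₁ with h₁ | h₁ <;> rcases mem_insert.1 he₂ with h₂ | h₂
      · exact absurd (h₁.trans h₂.symm) hne
      · exact fun hw₂ => hncov w (h₁ ▸ hw₁) (mem_covered.2 ⟨e₂, h₂, hw₂⟩)
      · exact fun hw₂ => hncov w (h₂ ▸ hw₂) (mem_covered.2 ⟨e₁, h₁, hw₁⟩)
      · exact (mem_matchings.1 h1).2 e₁ h₁ e₂ h₂ hne w hw₁
    · rw [covered_insert, disjoint_union_left]
      exact ⟨h2, disjoint_left.2 fun v hv => (mem_SS.1 (hesS hv)).2⟩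
    · intro v hv
      rw [hS', mem_sdiff, mem_es] at hv
      rw [if_neg hv.2]
      exact h3 v hv.1
    · intro v hv
      by_cases hve : v ∈ e
      · rw [if_pos hve]
      · rw [if_neg hve]
        refine h4 v fun hvS => hv ?_
        rw [hS', mem_sdiff, mem_es]
        exact ⟨hvS, hve⟩
  · ext f
    simp only [mem_Ds]
    by_cases hfE : f ∈ T.edgeFinset
    · simp only [hfE, true_and]
      by_cases hfe : f = e
      · subst hfe
        simp only [mem_insert, true_or, true_iff, he, false_or]
        exact hA
      · simp only [mem_insert, hfe, false_or]
        constructor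
        · rintro (hfM | hA')
          · exact Or.inl hfM
          · refine Or.inr fun w hw => ?_
            obtain ⟨hwS, hgw⟩ := hA' w hw
            rw [hS', mem_sdiff, mem_es] at hwS
            rw [if_neg hwS.2] at hgw
            exact ⟨hwS.1, hgw⟩
        · rintro (hfM | hA')
          · exact Or.inl hfM
          · refine Or.inr fun w hw => ?_
            obtain ⟨hwS, hgw⟩ := hA' w hw
            have hwe : w ∉ e := by
              intro hwe
              rw [(hA w hwe).2] at hgw
              exact hfe hgw.symm
            rw [if_neg hwe]
            refine ⟨?_, hgw⟩
            rw [hS', mem_sdiff, mem_es]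
            exact ⟨hwS, hwe⟩
    · simp [hfE]
  · rw [hS', card_sdiff_of_subset hesS, es_card hee]
    have := card_le_card hesS
    rw [es_card hee] at this
    omega

lemma nonempty_choose_eq {α : Type*} {s t : Finset α} (h : s = t) (hs : s.Nonempty)
    (ht : t.Nonempty) : hs.choose = ht.choose := by subst h; rfl

lemma tog_spec {U : Finset V} {junk : Sym2 V} {p : (_ : Finset (Sym2 V)) × (V → Sym2 V)}
    (hp : p ∈ Om T U junk) (hD : (Ds T U p).Nonempty) :
    tog T U junk p ∈ Om T U junk ∧ Ds T U (tog T U junk p) = Ds T U p ∧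
    tog T U junk (tog T U junk p) = p ∧
    ((tog T U junk p).1.card + (SS U (tog T U junk p).1).card + 1 = p.1.card + (SS U p.1).card
      ∨ p.1.card + (SS U p.1).card + 1 =
        (tog T U junk p).1.card + (SS U (tog T U junk p).1).card) := by
  obtain ⟨M, g⟩ := p
  have hes : hD.choose ∈ Ds T U ⟨M, g⟩ := hD.choose_spec
  set e := hD.choose with hedef
  obtain ⟨heE, hor⟩ := mem_Ds.1 hes
  have hgv : ∀ v ∈ SS U M, g v ∈ T.incidenceFinset v := (mem_Om.1 hp).2.2.1
  have hjunk : ∀ v, v ∉ SS U M → g v = junk := (mem_Om.1 hp).2.2.2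
  by_cases heM : e ∈ M
  · have htogeq : tog T U junk ⟨M, g⟩ =
        ⟨M.erase e, fun v => if v ∈ e then e else g v⟩ := by
      rw [tog, dif_pos hD, ← hedef, if_pos heM]
    obtain ⟨hq, hDq, hc1, hc2⟩ := step_erase hp heM
    rw [htogeq]
    refine ⟨hq, hDq, ?_, by dsimp only; omega⟩
    have hDq' : (Ds T U ⟨M.erase e, fun v => if v ∈ e then e else g v⟩).Nonempty := by
      rw [hDq]; exact hD
    rw [tog, dif_pos hDq']
    have hch : hDq'.choose = e := nonempty_choose_eq hDq hDq' hD
    rw [hch]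
    have hne : e ∉ M.erase e := notMem_erase e M
    rw [if_neg hne]
    have hMeq : insert e (M.erase e) = M := insert_erase heM
    have hgeq : (fun v => if v ∈ e then junk else if v ∈ e then e else g v) = g := by
      funext v
      by_cases hve : v ∈ e
      · rw [if_pos hve]
        refine (hjunk v fun hvS => ?_).symm
        exact (mem_SS.1 hvS).1 (mem_covered.2 ⟨e, heM, hve⟩)
      · rw [if_neg hve, if_neg hve]
    dsimp only
    rw [hMeq, hgeq]
  · have hA := hor.resolve_left heM
    have htogeq : tog T U junk ⟨M, g⟩ =
        ⟨insert e M, fun v => if v ∈ e then junk else g v⟩ := by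
      rw [tog, dif_pos hD, ← hedef, if_neg heM]
    obtain ⟨hq, hDq, hc1, hc2⟩ := step_insert hp heE heM hA
    rw [htogeq]
    refine ⟨hq, hDq, ?_, by dsimp only; omega⟩
    have hDq' : (Ds T U ⟨insert e M, fun v => if v ∈ e then junk else g v⟩).Nonempty := by
      rw [hDq]; exact hD
    rw [tog, dif_pos hDq']
    have hch : hDq'.choose = e := nonempty_choose_eq hDq hDq' hD
    rw [hch]
    rw [if_pos (mem_insert_self e M)]
    have hMeq : (insert e M).erase e = M := erase_insert heM
    have hgeq : (fun v => if v ∈ e then e else if v ∈ e then junk else g v) = g := by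
      funext v
      by_cases hve : v ∈ e
      · rw [if_pos hve]
        exact ((hA v hve).2).symm
      · rw [if_neg hve, if_neg hve]
    dsimp only
    rw [hMeq, hgeq]

lemma sum_Om_cancel (U : Finset V) (junk : Sym2 V) :
    ∑ p ∈ Om T U junk, (-1 : ℝ) ^ (p.1.card + (SS U p.1).card)
      = (((Om T U junk).filter fun p => Ds T U p = ∅).card : ℝ) *
        (-1 : ℝ) ^ ((Finset.univ : Finset V) \ U).card := by
  rw [← sum_filter_add_sum_filter_not (Om T U junk) (fun p => Ds T U p = ∅)]
  have h2 : ∑ p ∈ (Om T U junk).filter (fun p => ¬ Ds T U p = ∅),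
      (-1 : ℝ) ^ (p.1.card + (SS U p.1).card) = 0 := by
    apply Finset.sum_involution (fun p _ => tog T U junk p)
    · intro a ha
      obtain ⟨haOm, haD⟩ := mem_filter.1 ha
      have hD : (Ds T U a).Nonempty := nonempty_iff_ne_empty.2 haD
      obtain ⟨_, _, _, hpar⟩ := tog_spec haOm hD
      rcases hpar with h | h
      · rw [← h, pow_succ]; ring
      · rw [← h, pow_succ]; ring
    · intro a ha _
      obtain ⟨haOm, haD⟩ := mem_filter.1 ha
      have hD : (Ds T U a).Nonempty := nonempty_iff_ne_empty.2 haD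
      obtain ⟨_, _, _, hpar⟩ := tog_spec haOm hD
      intro heq
      rw [heq] at hpar
      omega
    · intro a ha
      obtain ⟨haOm, haD⟩ := mem_filter.1 ha
      have hD : (Ds T U a).Nonempty := nonempty_iff_ne_empty.2 haD
      obtain ⟨h1, h2', _, _⟩ := tog_spec haOm hD
      rw [mem_filter]
      exact ⟨h1, by rw [h2']; exact haD⟩
    · intro a ha
      obtain ⟨haOm, haD⟩ := mem_filter.1 ha
      have hD : (Ds T U a).Nonempty := nonempty_iff_ne_empty.2 haD
      exact (tog_spec haOm hD).2.2.1
  rw [h2, add_zero]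
  have h1 : ∀ p ∈ (Om T U junk).filter (fun p => Ds T U p = ∅),
      (-1 : ℝ) ^ (p.1.card + (SS U p.1).card)
        = (-1 : ℝ) ^ ((Finset.univ : Finset V) \ U).card := by
    intro p hp
    obtain ⟨hpOm, hpD⟩ := mem_filter.1 hp
    have hM : p.1 = ∅ := by
      rw [← subset_empty, ← hpD]
      exact subset_Ds hpOm
    rw [hM]
    simp [SS]
  rw [sum_congr rfl h1, sum_const, nsmul_eq_mul]

lemma main_count (U : Finset V) (junk : Sym2 V) :
    ∑ M ∈ matchU T U, (-1 : ℝ) ^ (M.card + (SS U M).card) * ∏ v ∈ SS U M, (T.degree v : ℝ)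
      = (((Om T U junk).filter fun p => Ds T U p = ∅).card : ℝ) *
        (-1 : ℝ) ^ ((Finset.univ : Finset V) \ U).card := by
  rw [← sum_Om_cancel U junk, Om, Finset.sum_sigma]
  refine sum_congr rfl fun M hM => ?_
  dsimp only
  rw [Finset.sum_const, Fintype.card_piFinset]
  have hcard : ∀ v : V, (tf T U junk M v).card = if v ∈ SS U M then T.degree v else 1 := by
    intro v
    rw [tf]
    split
    · exact T.card_incidenceFinset_eq_degree v
    · exact card_singleton junk
  simp only [hcard]
  rw [Finset.prod_ite_mem, univ_inter, nsmul_eq_mul, Nat.cast_prod]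
  ring

end Aux

section TreeLemmas

variable [DecidableEq V] {T : SimpleGraph V}

lemma exists_shortest_path (hc : T.Connected) (v u : V) :
    ∃ p : T.Walk v u, p.IsPath ∧ p.length = T.dist v u := by
  obtain ⟨q, hq⟩ := (hc.preconnected v u).exists_walk_length_eq_dist
  refine ⟨q.bypass, q.bypass_isPath, le_antisymm ?_ (SimpleGraph.dist_le _)⟩
  calc q.bypass.length ≤ q.length := SimpleGraph.Walk.length_bypass_le q
  _ = T.dist v u := hq

lemma dist_lt_card [Fintype V] (hc : T.Connected) (v u : V) :
    T.dist v u < Fintype.card V := by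
  obtain ⟨p, hp, hlen⟩ := exists_shortest_path hc v u
  rw [← hlen]
  exact hp.length_lt

/-- a vertex strictly closer to `u` than `w` is not on a shortest `w`–`u` walk -/
lemma not_mem_support_of_shortest (hc : T.Connected) {w u x : V}
    (q : T.Walk w u) (hq : q.length = T.dist w u) (hx : T.dist w u < T.dist x u + T.dist w x) :
    x ∉ q.support := by
  intro hmem
  have h1 : T.dist w x ≤ (q.takeUntil x hmem).length := SimpleGraph.dist_le _
  have h2 : T.dist x u ≤ (q.dropUntil x hmem).length := SimpleGraph.dist_le _
  have h3 : (q.takeUntil x hmem).length + (q.dropUntil x hmem).length = q.length := by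
    have := congrArg SimpleGraph.Walk.length (q.take_spec hmem)
    rwa [SimpleGraph.Walk.length_append] at this
  omega

lemma tree_parent (hT : T.IsTree) (u : V) {v : V} (hv : v ≠ u) :
    ∃ w, T.Adj v w ∧ T.dist w u + 1 = T.dist v u := by
  obtain ⟨p, hp, hlen⟩ := exists_shortest_path hT.isConnected v u
  have hd : 0 < T.dist v u := hT.isConnected.pos_dist_of_ne hv
  cases p with
  | nil => rw [SimpleGraph.Walk.length_nil] at hlen; omega
  | @cons _ w _ h q =>
    refine ⟨w, h, ?_⟩
    have h1 : T.dist w u ≤ q.length := SimpleGraph.dist_le q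
    have h2 : T.dist v u ≤ T.dist v w + T.dist w u := hT.isConnected.dist_triangle
    have h3 : T.dist v w = 1 := SimpleGraph.dist_eq_one_iff_adj.2 h
    have h4 : q.length + 1 = T.dist v u := by
      rw [← hlen, SimpleGraph.Walk.length_cons]
    omega

lemma adj_dist_ne (hT : T.IsTree) (u : V) {v w : V} (h : T.Adj v w) :
    T.dist v u ≠ T.dist w u := by
  intro heq
  have hvw : v ≠ w := h.ne
  by_cases hd : T.dist w u = 0
  · have hw : w = u := (hT.isConnected.dist_eq_zero_iff).1 hd
    have hv : v = u := (hT.isConnected.dist_eq_zero_iff).1 (heq.trans hd)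
    exact hvw (hv.trans hw.symm)
  · obtain ⟨q, hq, hqlen⟩ := exists_shortest_path hT.isConnected w u
    have hvq : v ∉ q.support := by
      apply not_mem_support_of_shortest hT.isConnected q hqlen
      have : 0 < T.dist w v := hT.isConnected.pos_dist_of_ne (Ne.symm hvw)
      omega
    obtain ⟨p, hp, hplen⟩ := exists_shortest_path hT.isConnected v u
    have hcons : (SimpleGraph.Walk.cons h q).IsPath := hq.cons hvq
    have := hT.IsAcyclic.path_unique ⟨p, hp⟩ ⟨SimpleGraph.Walk.cons h q, hcons⟩
    have hlen := congrArg (fun r : T.Path v u => r.1.length) this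
    simp only [SimpleGraph.Walk.length_cons] at hlen
    rw [hplen, hqlen] at hlen
    omega

lemma parent_unique (hT : T.IsTree) (u : V) {v w w' : V}
    (h : T.Adj v w) (h' : T.Adj v w')
    (hw : T.dist w u + 1 = T.dist v u) (hw' : T.dist w' u + 1 = T.dist v u) :
    w = w' := by
  obtain ⟨q, hq, hqlen⟩ := exists_shortest_path hT.isConnected w u
  obtain ⟨q', hq', hqlen'⟩ := exists_shortest_path hT.isConnected w' u
  have hvq : v ∉ q.support := by
    apply not_mem_support_of_shortest hT.isConnected q hqlen
    have : 0 < T.dist w v := hT.isConnected.pos_dist_of_ne (Ne.symm h.ne)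
    omega
  have hvq' : v ∉ q'.support := by
    apply not_mem_support_of_shortest hT.isConnected q' hqlen'
    have : 0 < T.dist w' v := hT.isConnected.pos_dist_of_ne (Ne.symm h'.ne)
    omega
  have hP : (SimpleGraph.Walk.cons h q).IsPath := hq.cons hvq
  have hP' : (SimpleGraph.Walk.cons h' q').IsPath := hq'.cons hvq'
  have := hT.IsAcyclic.path_unique ⟨SimpleGraph.Walk.cons h q, hP⟩
    ⟨SimpleGraph.Walk.cons h' q', hP'⟩
  have hsup := congrArg (fun r : T.Path v u => r.1.support) this
  simp only [SimpleGraph.Walk.support_cons] at hsup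
  have h1 : q.support = w :: q.support.tail := q.support_eq_cons
  have h2 : q'.support = w' :: q'.support.tail := q'.support_eq_cons
  rw [h1, h2] at hsup
  rw [List.cons.injEq, List.cons.injEq] at hsup
  exact hsup.2.1

lemma g_down [Fintype V] (hT : T.IsTree) (u : V) (g : V → Sym2 V)
    (hg : ∀ v, v ≠ u → ∃ w, T.Adj v w ∧ g v = s(v, w))
    (hinj : ∀ v w, v ≠ u → w ≠ u → g v = g w → v = w) :
    ∀ v, v ≠ u → ∀ w, T.Adj v w → g v = s(v, w) → T.dist w u + 1 = T.dist v u := by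
  suffices key : ∀ k v, v ≠ u → Fintype.card V - T.dist v u = k →
      ∀ w, T.Adj v w → g v = s(v, w) → T.dist w u + 1 = T.dist v u by
    exact fun v hv => key _ v hv rfl
  intro k
  induction k using Nat.strong_induction_on with
  | _ k IH =>
    intro v hv hk w hadj hgv
    by_contra hne'
    have hne := adj_dist_ne hT u hadj
    have h1 : T.dist v u ≤ T.dist v w + T.dist w u := hT.isConnected.dist_triangle
    have h2 : T.dist w u ≤ T.dist w v + T.dist v u := hT.isConnected.dist_triangle
    have h3 : T.dist v w = 1 := SimpleGraph.dist_eq_one_iff_adj.2 hadj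
    have h4 : T.dist w v = 1 := SimpleGraph.dist_eq_one_iff_adj.2 hadj.symm
    have hcase : T.dist w u = T.dist v u + 1 := by omega
    have hwu : w ≠ u := by
      intro h
      rw [h, SimpleGraph.dist_self] at hcase
      omega
    obtain ⟨w', hadj', hgw⟩ := hg w hwu
    have hvlt : T.dist v u < Fintype.card V := dist_lt_card hT.isConnected v u
    have hklt : Fintype.card V - T.dist w u < k := by omega
    have hstep := IH _ hklt w hwu rfl w' hadj' hgw
    have hveq : v = w' := parent_unique hT u hadj.symm hadj' (by omega) (by omega)
    rw [← hveq] at hgw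
    have : g w = g v := by rw [hgw, hgv, Sym2.eq_swap]
    exact hadj.ne (hinj v w hv hwu this.symm)

end TreeLemmas

section Aux2

variable [Fintype V] [DecidableEq V] {T : SimpleGraph V} [DecidableRel T.Adj]
lemma double_mem_Ds {U : Finset V} {g : V → Sym2 V} {a b : V}
    (ha : g a ∈ T.incidenceFinset a) (hb : g b ∈ T.incidenceFinset b)
    (hab : a ≠ b) (hgab : g a = g b)
    (haS : a ∈ SS U (∅ : Finset (Sym2 V))) (hbS : b ∈ SS U (∅ : Finset (Sym2 V))) :
    g a ∈ Ds T U ⟨(∅ : Finset (Sym2 V)), g⟩ := by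
  have hai := ha
  have hbi := hb
  rw [SimpleGraph.mem_incidenceFinset] at hai hbi
  have haE : a ∈ g a := hai.2
  have hbE : b ∈ g a := hgab ▸ hbi.2
  have heq : g a = s(a, b) := (Sym2.mem_and_mem_iff hab).1 ⟨haE, hbE⟩
  rw [mem_Ds]
  refine ⟨SimpleGraph.mem_edgeFinset.2 hai.1, Or.inr fun w hw => ?_⟩
  rw [heq, Sym2.mem_iff] at hw
  rcases hw with rfl | rfl
  · exact ⟨haS, rfl⟩
  · exact ⟨hbS, hgab.symm⟩

lemma filterA (hT : T.IsTree) (junk : Sym2 V) :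
    (Om T ∅ junk).filter (fun p => Ds T ∅ p = ∅) = ∅ := by
  rw [eq_empty_iff_forall_notMem]
  rintro ⟨M, g⟩ hp
  obtain ⟨hpOm, hpD⟩ := mem_filter.1 hp
  have hM : M = ∅ := by
    have hsub := subset_Ds hpOm
    rw [hpD, subset_empty] at hsub
    exact hsub
  subst hM
  have hSS : ∀ v : V, v ∈ SS (∅ : Finset V) (∅ : Finset (Sym2 V)) := by
    intro v; rw [mem_SS]; simp
  have hg : ∀ v : V, g v ∈ T.incidenceFinset v := fun v =>
    (mem_Om.1 hpOm).2.2.1 v (hSS v)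
  have hcard : T.edgeFinset.card < (Finset.univ : Finset V).card := by
    have := hT.card_edgeFinset
    rw [card_univ]
    omega
  have hmaps : ∀ v ∈ (Finset.univ : Finset V), g v ∈ T.edgeFinset := by
    intro v _
    have hi := hg v
    rw [SimpleGraph.mem_incidenceFinset] at hi
    exact SimpleGraph.mem_edgeFinset.2 hi.1
  obtain ⟨a, _, b, _, hab, hgab⟩ :=
    Finset.exists_ne_map_eq_of_card_lt_of_maps_to hcard hmaps
  have := double_mem_Ds (hg a) (hg b) hab hgab (hSS a) (hSS b)
  rw [hpD] at this
  exact notMem_empty _ this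

lemma filterB (hT : T.IsTree) (u : V) (junk : Sym2 V) :
    ((Om T {u} junk).filter (fun p => Ds T {u} p = ∅)).card = 1 := by
  have hpar : ∀ v : V, v ≠ u → ∃ w, T.Adj v w ∧ T.dist w u + 1 = T.dist v u :=
    fun v hv => tree_parent hT u hv
  choose pf hpf1 hpf2 using hpar
  set g0 : V → Sym2 V := fun v => if h : v = u then junk else s(v, pf v h) with hg0def
  have hSS : ∀ v : V, v ∈ SS ({u} : Finset V) (∅ : Finset (Sym2 V)) ↔ v ≠ u := by
    intro v; rw [mem_SS]; simp
  -- g0 gives a member of the filter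
  have hg0mem : (⟨(∅ : Finset (Sym2 V)), g0⟩ :
      (_ : Finset (Sym2 V)) × (V → Sym2 V)) ∈ Om T {u} junk := by
    rw [mem_Om]
    refine ⟨?_, by simp, ?_, ?_⟩
    · rw [mem_matchings]
      exact ⟨empty_subset _, by simp⟩
    · intro v hv
      have hvu : v ≠ u := (hSS v).1 hv
      show g0 v ∈ _
      rw [hg0def]
      simp only [dif_neg hvu]
      rw [SimpleGraph.mem_incidenceFinset]
      exact ⟨(T.mem_edgeSet).2 (hpf1 v hvu), Sym2.mem_mk_left _ _⟩
    · intro v hv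
      have hvu : v = u := by
        by_contra h
        exact hv ((hSS v).2 h)
      show g0 v = junk
      rw [hg0def]
      simp only [dif_pos hvu]
  have hg0Ds : Ds T {u} ⟨(∅ : Finset (Sym2 V)), g0⟩ = ∅ := by
    rw [eq_empty_iff_forall_notMem]
    intro e he
    obtain ⟨heE, hor⟩ := mem_Ds.1 he
    rcases hor with h | hA
    · exact notMem_empty _ h
    · induction e using Sym2.ind with
      | _ a b =>
        have hadj : T.Adj a b := (T.mem_edgeSet).1 (SimpleGraph.mem_edgeFinset.1 heE)
        obtain ⟨haS, hga⟩ := hA a (Sym2.mem_mk_left a b)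
        obtain ⟨hbS, hgb⟩ := hA b (Sym2.mem_mk_right a b)
        have hau : a ≠ u := (hSS a).1 haS
        have hbu : b ≠ u := (hSS b).1 hbS
        rw [hg0def] at hga hgb
        simp only [dif_neg hau] at hga
        simp only [dif_neg hbu] at hgb
        have h1 : pf a hau = b := Sym2.congr_right.1 hga
        have h2 : pf b hbu = a := by
          rw [Sym2.eq_swap] at hgb
          exact Sym2.congr_left.1 hgb
        have d1 := hpf2 a hau
        have d2 := hpf2 b hbu
        rw [h1] at d1
        rw [h2] at d2
        omega
  have huniq : ∀ p ∈ (Om T {u} junk).filter (fun p => Ds T {u} p = ∅),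
      p = (⟨(∅ : Finset (Sym2 V)), g0⟩ : (_ : Finset (Sym2 V)) × (V → Sym2 V)) := by
    rintro ⟨M, g⟩ hp
    obtain ⟨hpOm, hpD⟩ := mem_filter.1 hp
    have hM : M = ∅ := by
      have hsub := subset_Ds hpOm
      rw [hpD, subset_empty] at hsub
      exact hsub
    subst hM
    have h3 : ∀ v ∈ SS ({u} : Finset V) (∅ : Finset (Sym2 V)), g v ∈ T.incidenceFinset v :=
      (mem_Om.1 hpOm).2.2.1
    have h4 : ∀ v, v ∉ SS ({u} : Finset V) (∅ : Finset (Sym2 V)) → g v = junk :=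
      (mem_Om.1 hpOm).2.2.2
    have hg : ∀ v, v ≠ u → ∃ w, T.Adj v w ∧ g v = s(v, w) := by
      intro v hv
      have hi := h3 v ((hSS v).2 hv)
      rw [SimpleGraph.mem_incidenceFinset] at hi
      have hve : v ∈ g v := hi.2
      refine ⟨Sym2.Mem.other hve, ?_, (Sym2.other_spec hve).symm⟩
      rw [← T.mem_edgeSet, Sym2.other_spec hve]
      exact hi.1
    have hinj : ∀ v w, v ≠ u → w ≠ u → g v = g w → v = w := by
      intro v w hv hw hgvw
      by_contra hvw
      have := double_mem_Ds (h3 v ((hSS v).2 hv)) (h3 w ((hSS w).2 hw)) hvw hgvw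
        ((hSS v).2 hv) ((hSS w).2 hw)
      rw [hpD] at this
      exact notMem_empty _ this
    have hdown := g_down hT u g hg hinj
    have hgeq : g = g0 := by
      funext v
      by_cases hv : v = u
      · subst hv
        rw [h4 v (fun h => ((hSS v).1 h) rfl), hg0def]
        · simp
      · obtain ⟨w, hadj, hgv⟩ := hg v hv
        have hd := hdown v hv w hadj hgv
        have hweq : w = pf v hv := parent_unique hT u hadj (hpf1 v hv) hd (hpf2 v hv)
        rw [hgv, hweq, hg0def]
        simp only [dif_neg hv]
    rw [hgeq]
  rw [Finset.card_eq_one]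
  refine ⟨⟨(∅ : Finset (Sym2 V)), g0⟩, eq_singleton_iff_unique_mem.2 ⟨?_, huniq⟩⟩
  rw [mem_filter]
  exact ⟨hg0mem, hg0Ds⟩

lemma derivative_finset_prod (S : Finset V) (f : V → Polynomial ℝ) :
    Polynomial.derivative (∏ v ∈ S, f v) =
      ∑ u ∈ S, (∏ v ∈ S.erase u, f v) * Polynomial.derivative (f u) := by
  induction S using Finset.induction with
  | empty => simp
  | @insert a s ha ih =>
    rw [Finset.prod_insert ha, Polynomial.derivative_mul, Finset.sum_insert ha,
      Finset.erase_insert ha, ih, Finset.mul_sum]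
    congr 1
    · ring
    · refine sum_congr rfl fun u hu => ?_
      have hua : u ≠ a := fun h => ha (h ▸ hu)
      rw [Finset.erase_insert_of_ne hua.symm, Finset.prod_insert (fun h => ha (mem_of_mem_erase h)),
        mul_assoc]

lemma prod_zero_sub (S : Finset V) :
    ∏ v ∈ S, ((0 : ℝ) - (T.degree v : ℝ)) =
      (-1 : ℝ) ^ S.card * ∏ v ∈ S, (T.degree v : ℝ) := by
  rw [← Finset.prod_const, ← Finset.prod_mul_distrib]
  exact Finset.prod_congr rfl fun v _ => by ring

lemma matchU_empty : matchU T (∅ : Finset V) = matchings T := by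
  rw [matchU]
  exact filter_true_of_mem fun M _ => disjoint_bot_right

lemma SS_empty_right (M : Finset (Sym2 V)) :
    SS (∅ : Finset V) M = Finset.univ \ covered M := by
  rw [SS, union_empty]

lemma coeff0 (hT : T.IsTree) : (lapMatch T).coeff 0 = 0 := by
  obtain ⟨v0⟩ := hT.isConnected.nonempty
  have hmc := main_count (T := T) ∅ s(v0, v0)
  rw [filterA hT s(v0, v0), card_empty, Nat.cast_zero, zero_mul, matchU_empty] at hmc
  rw [Polynomial.coeff_zero_eq_eval_zero, lapMatch, Polynomial.eval_finset_sum]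
  refine Eq.trans (sum_congr rfl fun M hM => ?_) hmc
  rw [Polynomial.eval_mul, Polynomial.eval_pow, Polynomial.eval_neg, Polynomial.eval_one,
    Polynomial.eval_prod]
  simp only [Polynomial.eval_sub, Polynomial.eval_X, Polynomial.eval_C]
  rw [prod_zero_sub, SS_empty_right, pow_add]
  ring

lemma erase_eq_SS (u : V) (M : Finset (Sym2 V)) :
    (Finset.univ \ covered M).erase u = SS ({u} : Finset V) M := by
  ext v
  simp only [mem_erase, mem_sdiff, mem_univ, true_and, mem_SS, mem_singleton]
  tauto

lemma coeff1 (hT : T.IsTree) :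
    (lapMatch T).coeff 1 = (Fintype.card V : ℝ) * (-1 : ℝ) ^ (Fintype.card V - 1) := by
  obtain ⟨v0⟩ := hT.isConnected.nonempty
  have h1 : (lapMatch T).coeff 1 = (Polynomial.derivative (lapMatch T)).eval 0 := by
    rw [← Polynomial.coeff_zero_eq_eval_zero, Polynomial.coeff_derivative]
    simp
  rw [h1, lapMatch, map_sum, Polynomial.eval_finset_sum]
  have h2 : ∀ M ∈ matchings T,
      Polynomial.eval 0 (Polynomial.derivative ((-1 : Polynomial ℝ) ^ M.card *
        ∏ v ∈ Finset.univ \ covered M, (Polynomial.X - Polynomial.C (T.degree v : ℝ))))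
      = ∑ u ∈ Finset.univ \ covered M, (-1 : ℝ) ^ M.card *
          ∏ v ∈ (Finset.univ \ covered M).erase u, ((0:ℝ) - (T.degree v : ℝ)) := by
    intro M _
    have hC : (-1 : Polynomial ℝ) ^ M.card = Polynomial.C ((-1 : ℝ) ^ M.card) := by
      rw [map_pow, map_neg, map_one]
    rw [hC, Polynomial.derivative_C_mul, derivative_finset_prod]
    have h3 : ∀ u ∈ Finset.univ \ covered M,
        (∏ v ∈ (Finset.univ \ covered M).erase u,
          (Polynomial.X - Polynomial.C (T.degree v : ℝ))) *
          Polynomial.derivative (Polynomial.X - Polynomial.C (T.degree u : ℝ))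
        = ∏ v ∈ (Finset.univ \ covered M).erase u,
            (Polynomial.X - Polynomial.C (T.degree v : ℝ)) := by
      intro u _
      rw [Polynomial.derivative_sub, Polynomial.derivative_X, Polynomial.derivative_C,
        sub_zero, mul_one]
    rw [sum_congr rfl h3, Polynomial.eval_mul, Polynomial.eval_C, Polynomial.eval_finset_sum,
      Finset.mul_sum]
    refine sum_congr rfl fun u _ => ?_
    rw [Polynomial.eval_prod]
    simp only [Polynomial.eval_sub, Polynomial.eval_X, Polynomial.eval_C]
  rw [sum_congr rfl h2]
  -- swap the two sums
  have h4 : ∑ M ∈ matchings T, ∑ u ∈ Finset.univ \ covered M, (-1 : ℝ) ^ M.card *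
        ∏ v ∈ (Finset.univ \ covered M).erase u, ((0:ℝ) - (T.degree v : ℝ))
      = ∑ u ∈ (Finset.univ : Finset V), ∑ M ∈ (matchings T).filter
          (fun M => u ∈ Finset.univ \ covered M), (-1 : ℝ) ^ M.card *
            ∏ v ∈ (Finset.univ \ covered M).erase u, ((0:ℝ) - (T.degree v : ℝ)) := by
    simp only [sum_filter]
    rw [Finset.sum_comm]
    refine sum_congr rfl fun M _ => ?_
    rw [← Finset.sum_filter, Finset.filter_mem_eq_inter, univ_inter]
  rw [h4]
  have h5 : ∀ u : V, (matchings T).filter (fun M => u ∈ Finset.univ \ covered M)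
      = matchU T {u} := by
    intro u
    rw [matchU]
    refine filter_congr fun M _ => ?_
    simp [Finset.disjoint_singleton_right]
  have h6 : ∀ u ∈ (Finset.univ : Finset V),
      ∑ M ∈ (matchings T).filter (fun M => u ∈ Finset.univ \ covered M),
        (-1 : ℝ) ^ M.card *
          ∏ v ∈ (Finset.univ \ covered M).erase u, ((0:ℝ) - (T.degree v : ℝ))
      = (-1 : ℝ) ^ (Fintype.card V - 1) := by
    intro u _
    rw [h5 u]
    have h7 : ∀ M ∈ matchU T {u}, (-1 : ℝ) ^ M.card *
          ∏ v ∈ (Finset.univ \ covered M).erase u, ((0:ℝ) - (T.degree v : ℝ))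
        = (-1 : ℝ) ^ (M.card + (SS ({u} : Finset V) M).card) *
            ∏ v ∈ SS ({u} : Finset V) M, (T.degree v : ℝ) := by
      intro M _
      rw [erase_eq_SS, prod_zero_sub, pow_add]
      ring
    rw [sum_congr rfl h7, main_count {u} s(v0, v0), filterB hT u s(v0, v0)]
    rw [card_sdiff_of_subset (subset_univ _), card_univ, card_singleton, Nat.cast_one, one_mul]
  rw [sum_congr rfl h6, sum_const, card_univ, nsmul_eq_mul]

theorem lapMatch_rootMultiplicity_zero_of_isTree' [Fintype V] [DecidableEq V]
    (T : SimpleGraph V) [DecidableRel T.Adj] (hT : T.IsTree) :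
    (lapMatch T).rootMultiplicity 0 = 1 := by
  have hc0 := coeff0 hT
  have hc1 := coeff1 hT
  have hn : 0 < Fintype.card V := Fintype.card_pos_iff.2 hT.isConnected.nonempty
  have hc1' : (lapMatch T).coeff 1 ≠ 0 := by
    rw [hc1]
    apply mul_ne_zero
    · exact Nat.cast_ne_zero.2 hn.ne'
    · exact pow_ne_zero _ (by norm_num)
  have hp : lapMatch T ≠ 0 := by
    intro h
    rw [h, Polynomial.coeff_zero] at hc1'
    exact hc1' rfl
  rw [Polynomial.rootMultiplicity_eq_natTrailingDegree']
  refine le_antisymm (Polynomial.natTrailingDegree_le_of_ne_zero hc1') ?_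
  by_contra h
  have h0 : (lapMatch T).natTrailingDegree = 0 := by omega
  have htc := Polynomial.trailingCoeff_nonzero_iff_nonzero.2 hp
  rw [Polynomial.trailingCoeff, h0, hc0] at htc
  exact htc rfl

end Aux2

/-- For a finite tree `T`, `0` is a root of the Laplacian matching
polynomial `𝓛𝓜(T, x)` of multiplicity exactly `1`. -/
theorem lapMatch_rootMultiplicity_zero_of_isTree [Fintype V] [DecidableEq V]
    (T : SimpleGraph V) [DecidableRel T.Adj] (hT : T.IsTree) :
    (lapMatch T).rootMultiplicity 0 = 1 := by
  exact lapMatch_rootMultiplicity_zero_of_isTree' T hT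

end LM
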